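/- For every m ≥ 1, P_{X₊,ℓ_{2m-1}} = Σ₊^{2ℓ_{2m-1}-1} ∖ F_{2m-1} and P_{X₋,ℓ_{2m}} = Σ₋^{2ℓ_{2m}-1} ∖ F_{2m}: a string of length 2ℓ_{2m-1}-1 is locally admissible for X₊ if and only if it is a string over Σ₊ not belonging to F_{2m-1} (and symmetrically for X₋). -/

import Mathlib

/-- The three-letter alphabet `Σ = {-1, 0, +1}`. -/
inductive Letter : Type
  | neg : Letter
  | zero : Letter
  | pos : Letter
deriving DecidableEq

instance instFintypeLetter : Fintype Letter :=
  ⟨{Letter.neg, Letter.zero, Letter.pos}, fun x => by cases x <;> simp⟩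

/-- `f₀(ω)`: the frequency of the symbol `0` in the finite string `ω`. -/
noncomputable def f0 {n : ℕ} (ω : Fin n → Letter) : ℝ :=
  ((Finset.univ.filter fun i => ω i = Letter.zero).card : ℝ) / n

/-- The binary entropy `H(t) = -t log t - (1-t) log (1-t)` (with `0 log 0 = 0`). -/
noncomputable def H (t : ℝ) : ℝ := -(t * Real.log t) - (1 - t) * Real.log (1 - t)

/-- `η` occurs as a consecutive substring of `ω` starting at position `s`. -/
def occursAt {p n : ℕ} (η : Fin p → Letter) (ω : Fin n → Letter) (s : ℕ) : Prop :=
  ∃ _h : s + p ≤ n, ∀ i : Fin p, η i = ω ⟨s + i.val, by have := i.isLt; omega⟩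

/-- `η` occurs as a consecutive substring of `ω`. -/
def occursIn {p n : ℕ} (η : Fin p → Letter) (ω : Fin n → Letter) : Prop :=
  ∃ s, occursAt η ω s

/-- The symbol forbidden at level `k`: `-1` for odd `k`, `+1` for even `k`. -/
def bad (k : ℕ) : Letter := if k % 2 = 1 then Letter.neg else Letter.pos

/-- The forbidden sets `F_k` of the construction of Section 4: strings of length `2ℓ_k - 1`
containing the bad symbol, or over the good alphabet with frequency of zeros `≥ r_k`,
or over the good alphabet containing a forbidden string of an earlier level of the same parity. -/
def Forb (ℓ : ℕ → ℕ) (r : ℕ → ℚ) (k : ℕ) : Set (Fin (2 * ℓ k - 1) → Letter) :=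
  {ω | ∃ i, ω i = bad k} ∪
    {ω | (∀ i, ω i ≠ bad k) ∧ (r k : ℝ) ≤ f0 ω} ∪
    {ω | (∀ i, ω i ≠ bad k) ∧
      ∃ k' : Fin k, 1 ≤ k'.val ∧ k'.val % 2 = k % 2 ∧
        ∃ η ∈ Forb ℓ r k'.val, occursIn η ω}
termination_by k
decreasing_by exact k'.isLt

open Classical in
/-- The locally admissible strings of length `2n-1`:  no string from `⋃_{k' ≡ parity, k' ≥ 1} F_{k'}`
occurs as a consecutive substring.  `parity = 1` corresponds to `X₊`, `parity = 0` to `X₋`. -/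
noncomputable def Padm (ℓ : ℕ → ℕ) (r : ℕ → ℚ) (parity : ℕ) (n : ℕ) :
    Finset (Fin (2 * n - 1) → Letter) :=
  Finset.univ.filter fun ω =>
    ∀ k, 1 ≤ k → k % 2 = parity → ∀ η ∈ Forb ℓ r k, ¬ occursIn η ω

/-- `m_k = (2ℓ_k - 1)/(2ℓ_{k-1} - 1)`. -/
def mblk (ℓ : ℕ → ℕ) (k : ℕ) : ℕ := (2 * ℓ k - 1) / (2 * ℓ (k - 1) - 1)

open Classical in
/-- Strings of length `N` which are concatenations of `m` blocks of length `L`,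
the blocks at the even positions (`0`-based) taken from `B` and the blocks at odd
positions equal to the constant block `g^L`. -/
noncomputable def CfromB {L : ℕ} (N m : ℕ) (g : Letter) (B : Finset (Fin L → Letter)) :
    Finset (Fin N → Letter) :=
  Finset.univ.filter fun ω => ∀ j < m,
    if j % 2 = 0 then ∃ η ∈ B, occursAt η ω (j * L)
    else occursAt (fun _ : Fin L => g) ω (j * L)

/-- `B₊,k = P_{X₊,ℓ_k} ∖ {(+1)^{2ℓ_k-1}}`. -/
noncomputable def Bplus (ℓ : ℕ → ℕ) (r : ℕ → ℚ) (k : ℕ) :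
    Finset (Fin (2 * ℓ k - 1) → Letter) :=
  Padm ℓ r 1 (ℓ k) \ {fun _ => Letter.pos}

/-- `B₋,k = P_{X₋,ℓ_k} ∖ {(-1)^{2ℓ_k-1}}`. -/
noncomputable def Bminus (ℓ : ℕ → ℕ) (r : ℕ → ℚ) (k : ℕ) :
    Finset (Fin (2 * ℓ k - 1) → Letter) :=
  Padm ℓ r 0 (ℓ k) \ {fun _ => Letter.neg}

/-- `C₊,k`: alternating concatenations of blocks from `B₊,k-1` and constant `+1` blocks. -/
noncomputable def Cplus (ℓ : ℕ → ℕ) (r : ℕ → ℚ) (k : ℕ) :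
    Finset (Fin (2 * ℓ k - 1) → Letter) :=
  CfromB (2 * ℓ k - 1) (mblk ℓ k) Letter.pos (Bplus ℓ r (k - 1))

/-- `C₋,k`: alternating concatenations of blocks from `B₋,k-1` and constant `-1` blocks. -/
noncomputable def Cminus (ℓ : ℕ → ℕ) (r : ℕ → ℚ) (k : ℕ) :
    Finset (Fin (2 * ℓ k - 1) → Letter) :=
  CfromB (2 * ℓ k - 1) (mblk ℓ k) Letter.neg (Bminus ℓ r (k - 1))

/-- The subshift `X_k ⊆ Σ^ℤ`: bi-infinite sequences in which no string of `F_k` occurs. -/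
def Xk (ℓ : ℕ → ℕ) (r : ℕ → ℚ) (k : ℕ) : Set (ℤ → Letter) :=
  {x | ∀ η ∈ Forb ℓ r k, ∀ j : ℤ, ¬ (∀ i : Fin (2 * ℓ k - 1), η i = x (j + (i.val : ℤ)))}

/-- `X₊ = ⋂_{m ≥ 1} X_{2m-1}`. -/
def Xplus (ℓ : ℕ → ℕ) (r : ℕ → ℚ) : Set (ℤ → Letter) :=
  {x | ∀ m, 1 ≤ m → x ∈ Xk ℓ r (2 * m - 1)}

/-- `X₋ = ⋂_{m ≥ 1} X_{2m}`. -/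
def Xminus (ℓ : ℕ → ℕ) (r : ℕ → ℚ) : Set (ℤ → Letter) :=
  {x | ∀ m, 1 ≤ m → x ∈ Xk ℓ r (2 * m)}


-- window lemma
lemma window_occ {n p : ℕ} (hp0 : 0 < p) (hpn : p ≤ n) (ω : Fin n → Letter) (i : Fin n) :
    ∃ η : Fin p → Letter, (∃ j : Fin p, η j = ω i) ∧ occursIn η ω := by
  have hmc : min i.val (n - p) = i.val ∨ min i.val (n - p) = n - p := min_choice _ _
  set s := min i.val (n - p) with hsdef
  have hile := i.isLt
  have hsp : s + p ≤ n := by omega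
  have hsi : s ≤ i.val := by omega
  have hij : i.val - s < p := by omega
  refine ⟨fun j => ω ⟨s + j.val, by have := j.isLt; omega⟩,
    ⟨⟨i.val - s, hij⟩, ?_⟩, ⟨s, hsp, fun j => rfl⟩⟩
  exact congrArg ω (Fin.ext (by simp; omega))

lemma lmono_lt (ℓ : ℕ → ℕ) (hlmono : ∀ k, 1 ≤ k → ℓ k < ℓ (k + 1)) :
    ∀ b a, 1 ≤ a → a < b → ℓ a < ℓ b := by
  intro b
  induction b with
  | zero => intro a ha hab; omega
  | succ n ih =>
    intro a ha hab
    rcases Nat.lt_succ_iff_lt_or_eq.mp hab with h | h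
    · exact (ih a ha h).trans (hlmono n (by omega))
    · subst h; exact hlmono a ha

lemma general_adm (ℓ : ℕ → ℕ) (r : ℕ → ℚ)
    (hlmono : ∀ k, 1 ≤ k → ℓ k < ℓ (k + 1)) (K k₀ : ℕ)
    (h1 : 1 ≤ k₀) (h0 : k₀ ≤ K) (hpar : k₀ % 2 = K % 2) (hl : 1 ≤ ℓ k₀)
    (ω : Fin (2 * ℓ K - 1) → Letter) :
    ω ∈ Padm ℓ r (K % 2) (ℓ K) ↔ (∀ i, ω i ≠ bad K) ∧ ω ∉ Forb ℓ r K := by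
  have hK1 : 1 ≤ K := le_trans h1 h0
  have hmono : ∀ a b, 1 ≤ a → a ≤ b → ℓ a ≤ ℓ b := by
    intro a b ha hab
    rcases eq_or_lt_of_le hab with h | h
    · subst h; exact le_refl _
    · exact le_of_lt (lmono_lt ℓ hlmono b a ha h)
  have hlK : 1 ≤ ℓ K := le_trans hl (hmono k₀ K h1 h0)
  have hbadk₀ : bad k₀ = bad K := by unfold bad; rw [hpar]
  simp only [Padm, Finset.mem_filter, Finset.mem_univ, true_and]
  constructor
  · intro h
    constructor
    · intro i hi
      -- window of length 2 * ℓ k₀ - 1 containing position i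
      have hlen : 2 * ℓ k₀ - 1 ≤ 2 * ℓ K - 1 := by
        have := hmono k₀ K h1 h0; omega
      obtain ⟨η, ⟨j, hj⟩, hocc⟩ := window_occ (p := 2 * ℓ k₀ - 1) (by omega) hlen ω i
      have hηF : η ∈ Forb ℓ r k₀ := by
        rw [Forb]
        left; left
        exact ⟨j, by rw [hj, hi, hbadk₀]⟩
      exact h k₀ h1 hpar η hηF hocc
    · intro hF
      refine h K hK1 rfl ω hF ⟨0, le_of_eq (by omega), fun j => ?_⟩
      exact congrArg ω (Fin.ext (by simp))
  · rintro ⟨hbad, hF⟩ k hk hkp η hη ⟨s, hs, hocc⟩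
    rcases lt_trichotomy k K with hlt | heq | hgt
    · -- ω ∈ Forb K via third branch, contradiction
      apply hF
      rw [Forb]
      right
      exact ⟨hbad, ⟨k, hlt⟩, hk, hkp, η, hη, ⟨s, hs, hocc⟩⟩
    · subst heq
      have hs0 : s = 0 := by omega
      subst hs0
      apply hF
      have : η = ω := by
        funext j
        rw [hocc j]
        exact congrArg ω (Fin.ext (by simp))
      rwa [this] at hη
    · have : ℓ K < ℓ k := lmono_lt ℓ hlmono k K hK1 hgt
      omega

theorem admissible_eq_complement_forbidden (ℓ : ℕ → ℕ) (r : ℕ → ℚ)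
    (hl1 : ℓ 1 = 4) (hlmono : ∀ k, 1 ≤ k → ℓ k < ℓ (k + 1))
    (hr1 : r 1 = 1 / 2) (hrpos : ∀ k, 1 ≤ k → 0 < r k) (hrhalf : ∀ k, 1 ≤ k → r k ≤ 1 / 2) :
    ∀ m, 1 ≤ m →
      (∀ ω : Fin (2 * ℓ (2 * m - 1) - 1) → Letter,
        ω ∈ Padm ℓ r 1 (ℓ (2 * m - 1)) ↔
          ((∀ i, ω i ≠ Letter.neg) ∧ ω ∉ Forb ℓ r (2 * m - 1))) ∧
      (∀ ω : Fin (2 * ℓ (2 * m) - 1) → Letter,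
        ω ∈ Padm ℓ r 0 (ℓ (2 * m)) ↔
          ((∀ i, ω i ≠ Letter.pos) ∧ ω ∉ Forb ℓ r (2 * m))) := by
  intro m hm
  have hodd : (2 * m - 1) % 2 = 1 := by omega
  have heven : (2 * m) % 2 = 0 := by omega
  have hl2 : 4 < ℓ 2 := by have := hlmono 1 le_rfl; rw [hl1] at this; exact this
  constructor
  · intro ω
    have h := general_adm ℓ r hlmono (2 * m - 1) 1 le_rfl (by omega)
      (by omega) (by omega) ω
    rw [hodd] at h
    have hb : bad (2 * m - 1) = Letter.neg := by unfold bad; rw [hodd]; rfl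
    rw [hb] at h
    exact h
  · intro ω
    have h := general_adm ℓ r hlmono (2 * m) 2 (by omega) (by omega)
      (by omega) (by omega) ω
    rw [heven] at h
    have hb : bad (2 * m) = Letter.pos := by unfold bad; rw [heven]; simp
    rw [hb] at h
    exact h
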